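/- Given nonempty compact sets A_0, …, A_n ⊆ ℝ^d (n ≥ 1), an index 0 ≤ j ≤ n and a point a ∈ A_j, there exists a metric chain (a_0, …, a_n) of A_0, …, A_n with a_j = a. -/

import Mathlib

open Filter Metric Topology Set TopologicalSpace

noncomputable section

/-- The set of projections of `x` on `B`: points of `B` nearest to `x`. -/
def metricProj {E : Type*} [MetricSpace E] (x : E) (B : Set E) : Set E :=
  {b ∈ B | dist x b = Metric.infDist x B}

/-- The set of metric pairs of `A` and `B`. -/
def MetricPairs {E : Type*} [MetricSpace E] (A B : Set E) : Set (E × E) :=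
  {p | p.1 ∈ A ∧ p.2 ∈ B ∧ (p.1 ∈ metricProj p.2 A ∨ p.2 ∈ metricProj p.1 B)}

/-- A partition `a = x_0 < x_1 < ... < x_n = b` of `[a,b]`. -/
structure ChainPartition (a b : ℝ) where
  n : ℕ
  pts : Fin (n + 1) → ℝ
  mono : StrictMono pts
  first : pts 0 = a
  last : pts (Fin.last n) = b

/-- The norm `|χ| = max_i (x_{i+1} - x_i)` of a partition. -/
noncomputable def ChainPartition.meshNorm {a b : ℝ} (χ : ChainPartition a b) : ℝ :=
  ⨆ i : Fin χ.n, (χ.pts i.succ - χ.pts i.castSucc)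

/-- `c` is a chain function of the set-valued function `F` based on the partition `χ`:
it is piecewise constant, with values at consecutive partition points forming metric pairs
of the corresponding values of `F`. -/
def IsChainFun {E : Type*} [MetricSpace E] {a b : ℝ}
    (F : ℝ → Set E) (χ : ChainPartition a b) (c : ℝ → E) : Prop :=
  ∃ y : Fin (χ.n + 1) → E,
    (∀ i : Fin χ.n,
      (y i.castSucc, y i.succ) ∈ MetricPairs (F (χ.pts i.castSucc)) (F (χ.pts i.succ))) ∧
    (∀ i : Fin χ.n, ∀ t ∈ Set.Ico (χ.pts i.castSucc) (χ.pts i.succ), c t = y i.castSucc) ∧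
    c b = y (Fin.last χ.n)

/-- `s` is a metric selection of `F` on `[a,b]`: a selection of `F` which is the pointwise
limit of a sequence of chain functions of `F` whose partition norms tend to `0`. -/
def IsMetricSelection {E : Type*} [MetricSpace E] (F : ℝ → Set E) (a b : ℝ) (s : ℝ → E) : Prop :=
  (∀ x ∈ Set.Icc a b, s x ∈ F x) ∧
  ∃ χ : ℕ → ChainPartition a b, ∃ c : ℕ → ℝ → E,
    (∀ k, IsChainFun F (χ k) (c k)) ∧
    Filter.Tendsto (fun k => (χ k).meshNorm) Filter.atTop (nhds 0) ∧
    ∀ x ∈ Set.Icc a b, Filter.Tendsto (fun k => c k x) Filter.atTop (nhds (s x))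

/-- Property 2 of `F` at `ξ`, with `Fm = F(ξ-)`, `Fp = F(ξ+)`: every metric pair of the
one-sided limits is a limit of metric pairs `(y_n^-, y_n^+) ∈ Π(F(ξ_n^-), F(ξ_n^+))`
with `ξ_n^- < ξ < ξ_n^+`, `ξ_n^± → ξ`. -/
def Property2 {E : Type*} [MetricSpace E] (F : ℝ → Set E) (a b ξ : ℝ)
    (Fm Fp : Set E) : Prop :=
  ∀ ym yp : E, (ym, yp) ∈ MetricPairs Fm Fp →
    ∃ ξm ξp : ℕ → ℝ, ∃ ym' yp' : ℕ → E,
      (∀ n, ξm n ∈ Set.Ico a ξ) ∧ (∀ n, ξp n ∈ Set.Ioc ξ b) ∧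
      Filter.Tendsto ξm Filter.atTop (nhds ξ) ∧ Filter.Tendsto ξp Filter.atTop (nhds ξ) ∧
      (∀ n, (ym' n, yp' n) ∈ MetricPairs (F (ξm n)) (F (ξp n))) ∧
      Filter.Tendsto ym' Filter.atTop (nhds ym) ∧ Filter.Tendsto yp' Filter.atTop (nhds yp)

/-- The metric average `(1/2) A ⊕ (1/2) B = {(a+b)/2 : (a,b) ∈ Π(A,B)}`. -/
def metricAvg {E : Type*} [NormedAddCommGroup E] [NormedSpace ℝ E] (A B : Set E) : Set E :=
  {v | ∃ p ∈ MetricPairs A B, v = (2⁻¹ : ℝ) • (p.1 + p.2)}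

/-- The limit set `A_F(x) = {(s(x-) + s(x+))/2 : s a metric selection of F}`. -/
def limitSet {E : Type*} [NormedAddCommGroup E] [NormedSpace ℝ E]
    (F : ℝ → Set E) (a b x : ℝ) : Set E :=
  {v | ∃ s : ℝ → E, ∃ sm sp : E, IsMetricSelection F a b s ∧
      Filter.Tendsto s (nhdsWithin x (Set.Ico a x)) (nhds sm) ∧
      Filter.Tendsto s (nhdsWithin x (Set.Ioc x b)) (nhds sp) ∧
      v = (2⁻¹ : ℝ) • (sm + sp)}

/-- The left local quasi-modulus `ω̃⁻(f, xs, δ)` of `f` at `xs`, where `fl = f(xs-)`. -/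
noncomputable def qmodLeft {X : Type*} [PseudoMetricSpace X]
    (f : ℝ → X) (fl : X) (a b xs δ : ℝ) : ℝ :=
  sSup {r | ∃ x ∈ Set.Ico (xs - δ) xs ∩ Set.Icc a b, r = dist fl (f x)}

/-- The right local quasi-modulus `ω̃⁺(f, xs, δ)` of `f` at `xs`, where `fr = f(xs+)`. -/
noncomputable def qmodRight {X : Type*} [PseudoMetricSpace X]
    (f : ℝ → X) (fr : X) (a b xs δ : ℝ) : ℝ :=
  sSup {r | ∃ x ∈ Set.Ioc xs (xs + δ) ∩ Set.Icc a b, r = dist fr (f x)}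

/-- The graph of a set-valued function on `[a,b]` is compact. -/
def HasCompactGraph {E : Type*} [MetricSpace E] (F : ℝ → Set E) (a b : ℝ) : Prop :=
  IsCompact {p : ℝ × E | p.1 ∈ Set.Icc a b ∧ p.2 ∈ F p.1}

/-- The (real-valued) variation function `v_f(x) = V_a^x(f)`. -/
noncomputable def varFun {X : Type*} [PseudoEMetricSpace X] (f : ℝ → X) (a x : ℝ) : ℝ :=
  (eVariationOn f (Set.Icc a x)).toReal

/-- Upper Kuratowski limit of a sequence of sets in a topological space. -/
def kuratowskiLimsup {X : Type*} [TopologicalSpace X] (C : ℕ → Set X) : Set X :=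
  {x | ∃ φ : ℕ → ℕ, StrictMono φ ∧ ∃ c : ℕ → X,
    (∀ k, c k ∈ C (φ k)) ∧ Filter.Tendsto c Filter.atTop (nhds x)}

open Fin.NatCast

/-- through any point of any of the sets there is a metric chain. -/
theorem stmt_4 {d : ℕ} {n : ℕ} (hn : 1 ≤ n)
    (A : Fin (n + 1) → Set (EuclideanSpace ℝ (Fin d)))
    (hA : ∀ i, IsCompact (A i)) (hAne : ∀ i, (A i).Nonempty)
    (j : Fin (n + 1)) (a : EuclideanSpace ℝ (Fin d)) (ha : a ∈ A j) :
    ∃ ch : Fin (n + 1) → EuclideanSpace ℝ (Fin d),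
      (∀ i : Fin n, (ch i.castSucc, ch i.succ) ∈ MetricPairs (A i.castSucc) (A i.succ)) ∧
      ch j = a := by
  classical
  have hprop : ∀ (m : ℕ) (x : EuclideanSpace ℝ (Fin d)), ∃ b, b ∈ A (m : Fin (n+1)) ∧
      dist x b = Metric.infDist x (A (m : Fin (n+1))) := by
    intro m x
    obtain ⟨y, hy, hd⟩ := (hA _).exists_infDist_eq_dist (hAne _) x
    exact ⟨y, hy, hd.symm⟩
  choose p hp1 hp2 using hprop
  let down : ℕ → EuclideanSpace ℝ (Fin d) := fun k => Nat.rec a (fun k v => p (j.val - k - 1) v) k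
  let up : ℕ → EuclideanSpace ℝ (Fin d) := fun k => Nat.rec a (fun k v => p (j.val + k + 1) v) k
  have down_succ : ∀ k, down (k+1) = p (j.val - k - 1) (down k) := fun k => rfl
  have up_succ : ∀ k, up (k+1) = p (j.val + k + 1) (up k) := fun k => rfl
  have hja : a ∈ A ((j.val : ℕ) : Fin (n+1)) := by
    rwa [Fin.cast_val_eq_self]
  have hdown_mem : ∀ k, down k ∈ A ((j.val - k : ℕ) : Fin (n+1)) := by
    intro k
    induction k with
    | zero => simpa [down] using hja
    | succ k ih =>
      rw [down_succ]
      have h1 : j.val - k - 1 = j.val - (k+1) := by omega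
      rw [← h1]
      exact hp1 _ _
  have hup_mem : ∀ k, up k ∈ A ((j.val + k : ℕ) : Fin (n+1)) := by
    intro k
    induction k with
    | zero => simpa [up] using hja
    | succ k ih =>
      rw [up_succ]
      have h1 : j.val + k + 1 = j.val + (k+1) := by omega
      rw [← h1]
      exact hp1 _ _
  refine ⟨fun i => if i.val ≤ j.val then down (j.val - i.val) else up (i.val - j.val), ?_, ?_⟩
  · intro i
    have hcv : (i.castSucc : Fin (n+1)).val = i.val := rfl
    have hsv : (i.succ : Fin (n+1)).val = i.val + 1 := rfl
    have hcastCS : ((i.val : ℕ) : Fin (n+1)) = i.castSucc := by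
      rw [← hcv, Fin.cast_val_eq_self]
    have hcastS : ((i.val + 1 : ℕ) : Fin (n+1)) = i.succ := by
      rw [← hsv, Fin.cast_val_eq_self]
    by_cases h : i.val + 1 ≤ j.val
    · -- both down
      have h0 : i.val ≤ j.val := by omega
      simp only [hcv, hsv, if_pos h0, if_pos h]
      have hk : j.val - i.val = (j.val - (i.val + 1)) + 1 := by omega
      have hidx : j.val - (j.val - (i.val + 1)) - 1 = i.val := by omega
      have heq : down (j.val - i.val) = p i.val (down (j.val - (i.val + 1))) := by
        rw [hk, down_succ, hidx]
      refine ⟨?_, ?_, Or.inl ?_⟩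
      · have := hdown_mem (j.val - i.val)
        have h2 : j.val - (j.val - i.val) = i.val := by omega
        rwa [h2, hcastCS] at this
      · have := hdown_mem (j.val - (i.val + 1))
        have h2 : j.val - (j.val - (i.val + 1)) = i.val + 1 := by omega
        rwa [h2, hcastS] at this
      · constructor
        · rw [heq, ← hcastCS]; exact hp1 _ _
        · rw [heq, ← hcastCS]; exact hp2 _ _
    · -- castSucc at index ≥ j (up side), succ = up (i.val + 1 - j.val)
      have hs : ¬ (i.val + 1 ≤ j.val) := h
      simp only [hcv, hsv, if_neg hs]
      have heqsucc : (i.val + 1 - j.val) = (i.val - j.val) + 1 := by omega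
      have hidx : j.val + (i.val - j.val) + 1 = i.val + 1 := by omega
      have hupmem1 : up (i.val - j.val) ∈ A i.castSucc := by
        by_cases h0 : i.val ≤ j.val
        · -- i.val = j.val
          have : i.val = j.val := by omega
          have := hup_mem (i.val - j.val)
          have h2 : j.val + (i.val - j.val) = i.val := by omega
          rwa [h2, hcastCS] at this
        · have := hup_mem (i.val - j.val)
          have h2 : j.val + (i.val - j.val) = i.val := by omega
          rwa [h2, hcastCS] at this
      have hfst : (if i.val ≤ j.val then down (j.val - i.val) else up (i.val - j.val))
          = up (i.val - j.val) := by
        by_cases h0 : i.val ≤ j.val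
        · have hij : i.val = j.val := by omega
          rw [if_pos h0]
          have : j.val - i.val = 0 := by omega
          have h2 : i.val - j.val = 0 := by omega
          rw [this, h2]; rfl
        · rw [if_neg h0]
      rw [hfst]
      have heq : up (i.val + 1 - j.val) = p (i.val + 1) (up (i.val - j.val)) := by
        rw [heqsucc, up_succ, hidx]
      refine ⟨hupmem1, ?_, Or.inr ?_⟩
      · have := hup_mem (i.val + 1 - j.val)
        have h2 : j.val + (i.val + 1 - j.val) = i.val + 1 := by omega
        rwa [h2, hcastS] at this
      · constructor
        · rw [heq, ← hcastS]; exact hp1 _ _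
        · rw [heq, ← hcastS]; exact hp2 _ _
  · simp only [le_refl, if_pos, Nat.sub_self]
    rfl
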